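/- Let x, y, u : ℝ² → ℝ and fix (s₀, t₀) ∈ ℝ². Assume the partial derivatives x_s, x_t, y_s, y_t, u_s, u_t all exist at (s₀, t₀) and that J = x_s·y_t − y_s·x_t ≠ 0 there. For h ≠ 0 define the forward differences Δa(h) = a(s₀ + h, t₀) − a(s₀, t₀) and δa(h) = a(s₀, t₀ + h) − a(s₀, t₀), and set Q(h) = (δy(h)·Δu(h) − Δy(h)·δu(h))/(Δx(h)·δy(h) − Δy(h)·δx(h)). Then Q(h) tends to (y_t·u_s − y_s·u_t)/(x_s·y_t − y_s·x_t) as h → 0. That is, the finite difference approximation u_x^{m,n} of the derivative u_x is consistent: in the continuous limit it converges to the implicit total derivative expression for u_x. -/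

import Mathlib

lemma diffquot_tendsto {f : ℝ → ℝ} {d a : ℝ} (hf : HasDerivAt f d a) :
    Filter.Tendsto (fun h : ℝ => (f (a + h) - f a) / h)
      (nhdsWithin (0 : ℝ) {(0 : ℝ)}ᶜ) (nhds d) := by
  have hslope := hasDerivAt_iff_tendsto_slope.1 hf
  have hmap : Filter.Tendsto (fun h : ℝ => a + h)
      (nhdsWithin (0 : ℝ) {(0 : ℝ)}ᶜ) (nhdsWithin a {a}ᶜ) := by
    apply Filter.Tendsto.inf
    · exact (continuous_const.add continuous_id).tendsto' 0 a (by simp)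
    · refine Filter.tendsto_principal.2 (Filter.eventually_principal.2 ?_)
      intro h hh
      simp only [Set.mem_compl_iff, Set.mem_singleton_iff] at *
      intro hc; exact hh (by linarith)
  have := hslope.comp hmap
  refine this.congr fun h => ?_
  simp [slope, div_eq_inv_mul]

/-- Consistency of the finite difference approximation u_x^{m,n}: as the step
h → 0 the difference quotient converges to (y_t u_s − y_s u_t)/(x_s y_t − y_s x_t). -/
theorem stmt_16
    (x y u : ℝ → ℝ → ℝ) (s0 t0 : ℝ)
    (xs xt ys yt us ut : ℝ)
    (hxs : HasDerivAt (fun s => x s t0) xs s0)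
    (hxt : HasDerivAt (fun t => x s0 t) xt t0)
    (hys : HasDerivAt (fun s => y s t0) ys s0)
    (hyt : HasDerivAt (fun t => y s0 t) yt t0)
    (hus : HasDerivAt (fun s => u s t0) us s0)
    (hut : HasDerivAt (fun t => u s0 t) ut t0)
    (hJ : xs * yt - ys * xt ≠ 0) :
    Filter.Tendsto
      (fun h : ℝ =>
        ((y s0 (t0 + h) - y s0 t0) * (u (s0 + h) t0 - u s0 t0)
          - (y (s0 + h) t0 - y s0 t0) * (u s0 (t0 + h) - u s0 t0))
        / ((x (s0 + h) t0 - x s0 t0) * (y s0 (t0 + h) - y s0 t0)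
          - (y (s0 + h) t0 - y s0 t0) * (x s0 (t0 + h) - x s0 t0)))
      (nhdsWithin (0 : ℝ) {(0 : ℝ)}ᶜ)
      (nhds ((yt * us - ys * ut) / (xs * yt - ys * xt))) := by
  have hX := diffquot_tendsto hxs
  have hXt := diffquot_tendsto hxt
  have hY := diffquot_tendsto hys
  have hYt := diffquot_tendsto hyt
  have hU := diffquot_tendsto hus
  have hUt := diffquot_tendsto hut
  have hnum : Filter.Tendsto
      (fun h : ℝ =>
        (y s0 (t0 + h) - y s0 t0)/h * ((u (s0 + h) t0 - u s0 t0)/h)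
        - (y (s0 + h) t0 - y s0 t0)/h * ((u s0 (t0 + h) - u s0 t0)/h))
      (nhdsWithin (0 : ℝ) {(0 : ℝ)}ᶜ) (nhds (yt * us - ys * ut)) :=
    (hYt.mul hU).sub (hY.mul hUt)
  have hden : Filter.Tendsto
      (fun h : ℝ =>
        (x (s0 + h) t0 - x s0 t0)/h * ((y s0 (t0 + h) - y s0 t0)/h)
        - (y (s0 + h) t0 - y s0 t0)/h * ((x s0 (t0 + h) - x s0 t0)/h))
      (nhdsWithin (0 : ℝ) {(0 : ℝ)}ᶜ) (nhds (xs * yt - ys * xt)) :=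
    (hX.mul hYt).sub (hY.mul hXt)
  have := hnum.div hden hJ
  refine this.congr' ?_
  filter_upwards [self_mem_nhdsWithin] with h hh
  simp only [Set.mem_compl_iff, Set.mem_singleton_iff] at hh
  rw [Pi.div_apply]
  field_simp
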